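/- Let X be an F-space and Y a normed space. A sequence of continuous linear operators (T_n : X → Y) is Li-Yorke chaotic if and only if it satisfies the Li-Yorke Chaotic Criterion. -/

import Mathlib

open Filter Topology

/-- A vector `x` is irregular for the sequence of operators `(T n)` if
`liminf ‖T n x‖ = 0` and `limsup ‖T n x‖ = ∞`. -/
def Irregular {X Y : Type*} [AddCommGroup X] [Module ℂ X] [TopologicalSpace X]
    [NormedAddCommGroup Y] [NormedSpace ℂ Y]
    (T : ℕ → X →L[ℂ] Y) (x : X) : Prop :=
  Filter.liminf (fun n => ENNReal.ofReal ‖T n x‖) Filter.atTop = 0 ∧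
  Filter.limsup (fun n => ENNReal.ofReal ‖T n x‖) Filter.atTop = ⊤

/-- The Li-Yorke Chaotic Criterion (LYCC): there exist a set `X₀ ⊆ X` and a strictly
increasing sequence of indices `(n k)` such that `T (n k) x → 0` for every `x ∈ X₀`,
and there is a bounded sequence `(a n)` in the closed linear span of `X₀` such that
`(T n (a n))` is unbounded. -/
def LYCC {X Y : Type*} [AddCommGroup X] [Module ℂ X] [TopologicalSpace X]
    [NormedAddCommGroup Y] [NormedSpace ℂ Y]
    (T : ℕ → X →L[ℂ] Y) : Prop :=
  ∃ (X₀ : Set X) (nk : ℕ → ℕ), StrictMono nk ∧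
    (∀ x ∈ X₀, Filter.Tendsto (fun k => T (nk k) x) Filter.atTop (nhds 0)) ∧
    ∃ a : ℕ → X, (∀ n, a n ∈ closure (Submodule.span ℂ X₀ : Set X)) ∧
      Bornology.IsVonNBounded ℂ (Set.range a) ∧
      ¬ ∃ M : ℝ, ∀ n, ‖T n (a n)‖ ≤ M

lemma liminf_ofReal_eq_zero_iff (f : ℕ → ℝ) :
    Filter.liminf (fun n => ENNReal.ofReal (f n)) Filter.atTop = 0 ↔
      ∀ ε : ℝ, 0 < ε → ∃ᶠ n in atTop, f n < ε := by
  constructor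
  · intro h ε hε
    by_contra hc
    rw [not_frequently] at hc
    have hev : ∀ᶠ n in atTop, ENNReal.ofReal ε ≤ ENNReal.ofReal (f n) := by
      filter_upwards [hc] with n hn
      exact ENNReal.ofReal_le_ofReal (le_of_not_gt hn)
    have : ENNReal.ofReal ε ≤ Filter.liminf (fun n => ENNReal.ofReal (f n)) Filter.atTop := by
      rw [Filter.liminf_eq]
      exact le_sSup hev
    rw [h] at this
    exact absurd this (by simpa using (ENNReal.ofReal_pos.2 hε).ne')
  · intro h
    rw [Filter.liminf_eq, ← ENNReal.bot_eq_zero, sSup_eq_bot]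
    intro a ha
    by_contra hne
    have hpos : 0 < a := pos_iff_ne_zero.2 hne
    set b := min a 1 with hb
    have hbpos : 0 < b := lt_min hpos zero_lt_one
    have hbne : b ≠ ⊤ := by simp [hb]
    have hbt : 0 < b.toReal := ENNReal.toReal_pos hbpos.ne' hbne
    obtain ⟨n, hn1, hn2⟩ := ((h b.toReal hbt).and_eventually ha).exists
    have : ENNReal.ofReal (f n) < b := by
      rw [← ENNReal.ofReal_toReal hbne]
      exact ENNReal.ofReal_lt_ofReal_iff hbt |>.2 hn1
    exact absurd hn2 (not_le.2 (lt_of_lt_of_le this (min_le_left _ _)))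

lemma limsup_ofReal_eq_top_iff (f : ℕ → ℝ) :
    Filter.limsup (fun n => ENNReal.ofReal (f n)) Filter.atTop = ⊤ ↔
      ∀ M : ℝ, ∃ᶠ n in atTop, M < f n := by
  constructor
  · intro h M
    by_contra hc
    rw [not_frequently] at hc
    have hev : ∀ᶠ n in atTop, ENNReal.ofReal (f n) ≤ ENNReal.ofReal M := by
      filter_upwards [hc] with n hn
      exact ENNReal.ofReal_le_ofReal (le_of_not_gt hn)
    have : Filter.limsup (fun n => ENNReal.ofReal (f n)) Filter.atTop ≤ ENNReal.ofReal M := by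
      rw [Filter.limsup_eq]; exact sInf_le hev
    rw [h] at this
    exact absurd this (by simp)
  · intro h
    rw [Filter.limsup_eq, sInf_eq_top]
    intro a ha
    by_contra hne
    obtain ⟨n, hn1, hn2⟩ := ((h a.toReal).and_eventually ha).exists
    have : a < ENNReal.ofReal (f n) := by
      conv_lhs => rw [← ENNReal.ofReal_toReal hne]
      exact ENNReal.ofReal_lt_ofReal_iff ((ENNReal.toReal_nonneg).trans_lt hn1) |>.2 hn1
    exact absurd hn2 (not_le.2 this)

lemma irregular_iff {X Y : Type*} [AddCommGroup X] [Module ℂ X] [TopologicalSpace X]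
    [NormedAddCommGroup Y] [NormedSpace ℂ Y]
    (T : ℕ → X →L[ℂ] Y) (x : X) :
    Irregular T x ↔
      (∀ ε : ℝ, 0 < ε → ∃ᶠ n in atTop, ‖T n x‖ < ε) ∧
      (∀ M : ℝ, ∃ᶠ n in atTop, M < ‖T n x‖) := by
  unfold Irregular
  rw [liminf_ofReal_eq_zero_iff, limsup_ofReal_eq_top_iff]

lemma irregular_smul {X Y : Type*} [AddCommGroup X] [Module ℂ X] [TopologicalSpace X]
    [NormedAddCommGroup Y] [NormedSpace ℂ Y]
    (T : ℕ → X →L[ℂ] Y) {x : X} (h : Irregular T x) {c : ℂ} (hc : c ≠ 0) :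
    Irregular T (c • x) := by
  rw [irregular_iff] at h ⊢
  have hcpos : (0:ℝ) < ‖c‖ := norm_pos_iff.2 hc
  have hnorm : ∀ n, ‖T n (c • x)‖ = ‖c‖ * ‖T n x‖ := by
    intro n; rw [map_smul, norm_smul]
  constructor
  · intro ε hε
    have := h.1 (ε / ‖c‖) (div_pos hε hcpos)
    refine this.mono fun n hn => ?_
    rw [hnorm]
    have h1 := mul_lt_mul_of_pos_left hn hcpos
    rwa [mul_div_cancel₀ _ hcpos.ne'] at h1
  · intro M
    have := h.2 (M / ‖c‖)
    refine this.mono fun n hn => ?_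
    rw [hnorm]
    rw [div_lt_iff₀ hcpos] at hn
    calc M < ‖T n x‖ * ‖c‖ := hn
      _ = ‖c‖ * ‖T n x‖ := mul_comm _ _

lemma exists_irregular_of_LYCC
    {X Y : Type*} [AddCommGroup X] [Module ℂ X] [MetricSpace X] [CompleteSpace X]
    [IsTopologicalAddGroup X] [ContinuousSMul ℂ X]
    [NormedAddCommGroup Y] [NormedSpace ℂ Y]
    (T : ℕ → X →L[ℂ] Y) (h : LYCC T) : ∃ x : X, Irregular T x := by
  obtain ⟨X₀, nk, hnk, h0, a, ha, hbdd, hub⟩ := h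
  set Z := (Submodule.span ℂ X₀).topologicalClosure with hZdef
  have hZcoe : (Z : Set X) = closure (Submodule.span ℂ X₀ : Set X) :=
    Submodule.topologicalClosure_coe _
  have hZclosed : IsClosed (Z : Set X) := by
    rw [hZcoe]; exact isClosed_closure
  haveI : CompleteSpace Z := hZclosed.completeSpace_coe
  have hZa : ∀ n, a n ∈ Z := by
    intro n
    have : a n ∈ (Z : Set X) := by rw [hZcoe]; exact ha n
    exact this
  -- continuity of the evaluation functions on Z
  have hcont : ∀ n, Continuous fun z : Z => ‖T n (z : X)‖ :=
    fun n => ((T n).continuous.comp continuous_subtype_val).norm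
  -- the dense subset of points of the span
  have hD : Dense {z : Z | (z : X) ∈ (Submodule.span ℂ X₀ : Set X)} := by
    intro z
    rw [closure_subtype]
    have himg : (Subtype.val '' {z : Z | (z : X) ∈ (Submodule.span ℂ X₀ : Set X)}) =
        (Submodule.span ℂ X₀ : Set X) := by
      apply Set.Subset.antisymm
      · rintro _ ⟨w, hw, rfl⟩; exact hw
      · intro v hv
        have hvZ : v ∈ Z := Submodule.le_topologicalClosure _ hv
        exact ⟨⟨v, hvZ⟩, hv, rfl⟩
    rw [himg, ← hZcoe]
    exact z.2
  -- every span point tends to 0 along the subsequence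
  have htend : ∀ v ∈ Submodule.span ℂ X₀,
      Tendsto (fun k => T (nk k) v) atTop (𝓝 0) := by
    intro v hv
    refine Submodule.span_induction (p := fun v _ => Tendsto (fun k => T (nk k) v) atTop (𝓝 0))
      (fun x hx => h0 x hx) ?_ ?_ ?_ hv
    · simp only [map_zero]; exact tendsto_const_nhds
    · intro x y _ _ hx hy
      have := hx.add hy
      simpa only [map_add, add_zero] using this
    · intro c x _ hx
      have := hx.const_smul c
      simpa only [map_smul, smul_zero] using this
  -- the open sets
  set O : Bool × ℕ × ℕ → Set Z := fun p =>
    ⋃ n, ⋃ (_ : p.2.2 ≤ n),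
      {z : Z | if p.1 then ‖T n (z : X)‖ < 1 / (p.2.1 + 1) else (p.2.1 : ℝ) < ‖T n (z : X)‖}
    with hOdef
  have hOopen : ∀ p, IsOpen (O p) := by
    rintro ⟨b, m, N⟩
    refine isOpen_iUnion fun n => isOpen_iUnion fun _ => ?_
    cases b
    · simpa using isOpen_lt continuous_const (hcont n)
    · simpa using isOpen_lt (hcont n) continuous_const
  -- density of the "small norm" pieces
  have hDsub : ∀ m N : ℕ, {z : Z | (z : X) ∈ (Submodule.span ℂ X₀ : Set X)} ⊆ O (true, m, N) := by
    intro m N z hz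
    have htz := htend _ hz
    rw [tendsto_zero_iff_norm_tendsto_zero] at htz
    have hev : ∀ᶠ k in atTop, ‖T (nk k) (z : X)‖ < 1 / (m + 1) := by
      have : (0:ℝ) < 1 / (m + 1) := by positivity
      exact htz.eventually (eventually_lt_nhds this)
    obtain ⟨k, hk1, hk2⟩ := ((eventually_ge_atTop N).and hev).exists
    have hnkN : N ≤ nk k := le_trans hk1 hnk.le_apply
    refine Set.mem_iUnion.2 ⟨nk k, Set.mem_iUnion.2 ⟨hnkN, ?_⟩⟩
    simpa using hk2
  have hOdense_true : ∀ m N : ℕ, Dense (O (true, m, N)) :=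
    fun m N => hD.mono (hDsub m N)
  -- density of the "large norm" pieces, by the boundedness argument
  have hOdense_false : ∀ m N : ℕ, Dense (O (false, m, N)) := by
    intro m N
    by_contra hnd
    rw [dense_iff_inter_open] at hnd
    push_neg at hnd
    obtain ⟨U, hUopen, hUne, hUdisj⟩ := hnd
    obtain ⟨z0, hz0⟩ := hUne
    have hb : ∀ z : Z, z ∈ U → ∀ n, N ≤ n → ‖T n (z : X)‖ ≤ m := by
      intro z hz n hn
      by_contra hgt
      have : z ∈ U ∩ O (false, m, N) := by
        refine ⟨hz, Set.mem_iUnion.2 ⟨n, Set.mem_iUnion.2 ⟨hn, ?_⟩⟩⟩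
        simpa using lt_of_not_ge hgt
      rw [hUdisj] at this
      exact this
    -- neighborhood of 0 in Z
    have hV0 : (fun w : Z => z0 + w) ⁻¹' U ∈ 𝓝 (0 : Z) := by
      have hc : Continuous fun w : Z => z0 + w := continuous_const.add continuous_id
      have : z0 + (0 : Z) ∈ U := by simpa using hz0
      exact hc.continuousAt.preimage_mem_nhds (hUopen.mem_nhds this)
    have h0Z : ((0 : Z) : X) = 0 := rfl
    rw [show (0 : Z) = ⟨(0 : X), Z.zero_mem⟩ from rfl, nhds_subtype_eq_comap, mem_comap] at hV0
    obtain ⟨V', hV'mem, hV'sub⟩ := hV0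
    -- absorb the bounded sequence
    have habs := hbdd hV'mem
    rw [absorbs_iff_norm] at habs
    obtain ⟨r, hr⟩ := habs
    set c : ℂ := ((max r 1 : ℝ) : ℂ) with hcdef
    have hcnorm : ‖c‖ = max r 1 := by
      rw [hcdef, Complex.norm_real, Real.norm_eq_abs, abs_of_pos]
      exact lt_of_lt_of_le zero_lt_one (le_max_right _ _)
    have hcge : r ≤ ‖c‖ := by rw [hcnorm]; exact le_max_left _ _
    have hcne : c ≠ 0 := by
      intro hc0
      rw [hc0] at hcnorm
      simp at hcnorm
      have := le_max_right r 1
      rw [← hcnorm] at this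
      linarith
    have hsub := hr c hcge
    -- bound for n ≥ N
    have hbound : ∀ n, N ≤ n → ‖T n (a n)‖ ≤ ‖c‖ * (2 * m) := by
      intro n hn
      obtain ⟨v, hvV', hav⟩ := hsub (Set.mem_range_self n)
      have hvZ : v ∈ Z := by
        have h1 : a n ∈ Z := hZa n
        have h2 := Z.smul_mem c⁻¹ h1
        rw [← hav, smul_smul, inv_mul_cancel₀ hcne, one_smul] at h2
        exact h2
      have hvV : (⟨v, hvZ⟩ : Z) ∈ (fun w : Z => z0 + w) ⁻¹' U := hV'sub hvV'
      have hz0v : z0 + (⟨v, hvZ⟩ : Z) ∈ U := hvV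
      have hb1 : ‖T n ((z0 : X) + v)‖ ≤ m := by
        have := hb _ hz0v n hn
        simpa using this
      have hb2 : ‖T n (z0 : X)‖ ≤ m := hb z0 hz0 n hn
      have hv2 : ‖T n v‖ ≤ 2 * m := by
        have : T n v = T n ((z0 : X) + v) - T n (z0 : X) := by
          rw [map_add]; abel
        rw [this]
        calc ‖T n ((z0 : X) + v) - T n (z0 : X)‖ ≤ ‖T n ((z0 : X) + v)‖ + ‖T n (z0 : X)‖ :=
              norm_sub_le _ _
          _ ≤ m + m := add_le_add hb1 hb2
          _ = 2 * m := by ring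
      calc ‖T n (a n)‖ = ‖T n (c • v)‖ := by rw [← hav]
        _ = ‖c‖ * ‖T n v‖ := by rw [map_smul, norm_smul]
        _ ≤ ‖c‖ * (2 * m) := by
            exact mul_le_mul_of_nonneg_left hv2 (norm_nonneg _)
    -- global bound : contradiction
    apply hub
    refine ⟨‖c‖ * (2 * m) + ∑ k ∈ Finset.range N, ‖T k (a k)‖, fun n => ?_⟩
    rcases le_or_gt N n with hn | hn
    · have hsumnn : (0:ℝ) ≤ ∑ k ∈ Finset.range N, ‖T k (a k)‖ :=
        Finset.sum_nonneg fun _ _ => norm_nonneg _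
      linarith [hbound n hn]
    · have h1 : ‖T n (a n)‖ ≤ ∑ k ∈ Finset.range N, ‖T k (a k)‖ :=
        Finset.single_le_sum (f := fun k => ‖T k (a k)‖) (fun _ _ => norm_nonneg _) (Finset.mem_range.2 hn)
      have h2 : (0:ℝ) ≤ ‖c‖ * (2 * m) := by positivity
      linarith
  have hOdense : ∀ p, Dense (O p) := by
    rintro ⟨b, m, N⟩
    cases b
    · exact hOdense_false m N
    · exact hOdense_true m N
  -- apply Baire
  have hdense : Dense (⋂ p, O p) := dense_iInter_of_isOpen hOopen hOdense
  haveI : Nonempty Z := ⟨⟨0, Z.zero_mem⟩⟩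
  obtain ⟨z, hz⟩ := hdense.nonempty
  refine ⟨(z : X), (irregular_iff T _).2 ⟨?_, ?_⟩⟩
  · intro ε hε
    obtain ⟨m, hm⟩ := exists_nat_one_div_lt hε
    rw [frequently_atTop]
    intro N
    have hzm := Set.mem_iInter.1 hz (true, m, N)
    obtain ⟨n, hn⟩ := Set.mem_iUnion.1 hzm
    obtain ⟨hnN, hnz⟩ := Set.mem_iUnion.1 hn
    refine ⟨n, hnN, ?_⟩
    simp only [Set.mem_setOf_eq, if_true] at hnz
    exact lt_trans hnz hm
  · intro M
    obtain ⟨m, hm⟩ := exists_nat_ge M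
    rw [frequently_atTop]
    intro N
    have hzm := Set.mem_iInter.1 hz (false, m, N)
    obtain ⟨n, hn⟩ := Set.mem_iUnion.1 hzm
    obtain ⟨hnN, hnz⟩ := Set.mem_iUnion.1 hn
    refine ⟨n, hnN, ?_⟩
    simp only [Set.mem_setOf_eq, if_false, Bool.false_eq_true] at hnz
    exact lt_of_le_of_lt hm hnz

/-- `(T n)` is Li-Yorke chaotic (there is an uncountable set Γ such that
p - q is irregular for all distinct p, q ∈ Γ) if and only if it satisfies the
Li-Yorke Chaotic Criterion. -/
theorem liYorkeChaotic_iff_LYCC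
    {X Y : Type*} [AddCommGroup X] [Module ℂ X] [MetricSpace X] [CompleteSpace X]
    [IsTopologicalAddGroup X] [ContinuousSMul ℂ X]
    [NormedAddCommGroup Y] [NormedSpace ℂ Y]
    (T : ℕ → X →L[ℂ] Y) :
    (∃ Γ : Set X, ¬ Γ.Countable ∧ ∀ p ∈ Γ, ∀ q ∈ Γ, p ≠ q → Irregular T (p - q)) ↔
      LYCC T := by
  constructor
  · rintro ⟨Γ, hΓc, hΓ⟩
    have hnt : Γ.Nontrivial := by
      by_contra hsub
      rw [Set.not_nontrivial_iff] at hsub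
      exact hΓc hsub.countable
    obtain ⟨p, hp, q, hq, hpq⟩ := hnt
    set x := p - q with hxdef
    have hx := hΓ p hp q hq hpq
    rw [irregular_iff] at hx
    have hfreq : ∀ k : ℕ, ∃ᶠ n in atTop, ‖T n x‖ < 1 / (k + 1) :=
      fun k => hx.1 _ (by positivity)
    obtain ⟨nk, hnkmono, hnkP⟩ := extraction_forall_of_frequently hfreq
    refine ⟨{x}, nk, hnkmono, ?_, fun _ => x, ?_, ?_, ?_⟩
    · intro y hy
      rw [Set.mem_singleton_iff] at hy
      subst hy
      rw [tendsto_zero_iff_norm_tendsto_zero]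
      exact squeeze_zero (fun _ => norm_nonneg _) (fun k => (hnkP k).le)
        tendsto_one_div_add_atTop_nhds_zero_nat
    · intro n
      exact subset_closure (Submodule.subset_span rfl)
    · rw [Set.range_const]
      exact Bornology.isVonNBounded_singleton x
    · rintro ⟨M, hM⟩
      obtain ⟨n, hn⟩ := (hx.2 M).exists
      exact absurd (hM n) (not_le.2 hn)
  · intro h
    obtain ⟨x, hx⟩ := exists_irregular_of_LYCC T h
    have hx0 : x ≠ 0 := by
      rintro rfl
      obtain ⟨n, hn⟩ := (((irregular_iff T 0).1 hx).2 1).exists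
      simp at hn
      linarith
    refine ⟨Set.range (fun lam : ℂ => lam • x), ?_, ?_⟩
    · intro hcnt
      have hinj : Function.Injective (fun lam : ℂ => lam • x) := by
        intro c d hcd
        by_contra hne
        have hcd' : c • x = d • x := hcd
        have hsub : (c - d) • x = 0 := by
          rw [sub_smul, hcd', sub_self]
        have : x = 0 := by
          have := congrArg (fun v => (c - d)⁻¹ • v) hsub
          simpa [smul_smul, inv_mul_cancel₀ (sub_ne_zero.2 hne)] using this
        exact hx0 this
      have huniv : ((fun lam : ℂ => lam • x) ⁻¹' Set.range (fun lam : ℂ => lam • x)) =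
          Set.univ := by
        ext c; simp [Set.mem_range]
      have hCuniv : (Set.univ : Set ℂ).Countable := by
        rw [← huniv]
        exact hcnt.preimage hinj
      have hRuniv : (Set.univ : Set ℝ).Countable := by
        have := hCuniv.preimage Complex.ofReal_injective
        simpa using this
      exact Cardinal.not_countable_real hRuniv
    · rintro _ ⟨c, rfl⟩ _ ⟨d, rfl⟩ hne
      have hcd : c ≠ d := by
        rintro rfl; exact hne rfl
      have : c • x - d • x = (c - d) • x := by rw [sub_smul]
      rw [this]
      exact irregular_smul T hx (sub_ne_zero.2 hcd)
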